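/- There exists a Cantor-type construction showing the second-order test is not necessary: if h: ℝ → ℝ is continuous, strictly increasing, with h' = 0 almost everywhere, then f(x) := ∫₀ˣ h(t) dt is strictly convex on ℝ but f'' = 0 almost everywhere. -/
import Mathlib

open MeasureTheory

theorem stmt3 (h : ℝ → ℝ) (hc : Continuous h) (hm : StrictMono h)
    (hz : ∀ᵐ x ∂volume, deriv h x = 0) :
    StrictConvexOn ℝ Set.univ (fun x => ∫ t in (0:ℝ)..x, h t) ∧
    ∀ᵐ x ∂volume, deriv (deriv (fun x => ∫ t in (0:ℝ)..x, h t)) x = 0 := by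
  have hd : deriv (fun x => ∫ t in (0:ℝ)..x, h t) = h := by
    funext x
    exact (intervalIntegral.integral_hasDerivAt_right (hc.intervalIntegrable 0 x)
      (hc.stronglyMeasurableAtFilter _ _) hc.continuousAt).deriv
  constructor
  · apply StrictMono.strictConvexOn_univ_of_deriv
    · exact (intervalIntegral.continuous_primitive (fun a b => hc.intervalIntegrable a b) 0)
    · rw [hd]; exact hm
  · rw [hd]; exact hz
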